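/- Let q ∈ ℂ satisfy q^{d−1}(q − 1) = −2 for some integer d ≥ 2 and |q| ≤ 1. Then q = −1 and d is odd. -/

import Mathlib

theorem stmt_13 (d : ℕ) (hd : 2 ≤ d) (q : ℂ)
    (h : q ^ (d - 1) * (q - 1) = -2) (habs : ‖q‖ ≤ 1) :
    q = -1 ∧ Odd d := by
  have habs' : ‖q ^ (d - 1) * (q - 1)‖ = 2 := by
    rw [h]; simp
  rw [norm_mul, norm_pow] at habs'
  have h1 : ‖q - 1‖ ≤ 2 := by
    calc ‖q - 1‖ ≤ ‖q‖ + ‖(1:ℂ)‖ := by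
          simpa using (norm_sub_le q 1)
      _ ≤ 2 := by simp; linarith
  have h0 : (0:ℝ) ≤ ‖q‖ := norm_nonneg q
  have hpow : ‖q‖ ^ (d - 1) ≤ 1 := pow_le_one₀ h0 habs
  have hpownn : (0:ℝ) ≤ ‖q‖ ^ (d - 1) := pow_nonneg h0 _
  have heq1 : ‖q‖ ^ (d - 1) = 1 ∧ ‖q - 1‖ = 2 := by
    constructor <;> nlinarith [norm_nonneg (q - 1)]
  have habsq : ‖q‖ = 1 := by
    rcases lt_or_eq_of_le habs with hlt | he
    · exfalso
      have : ‖q‖ ^ (d - 1) < 1 := by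
        apply pow_lt_one₀ h0 hlt
        omega
      linarith [heq1.1]
    · exact he
  -- turn into normSq equations
  have hn1 : Complex.normSq q = 1 := by
    have := Complex.sq_norm q
    rw [habsq] at this; linarith [this.symm]
  have hn2 : Complex.normSq (q - 1) = 4 := by
    have := Complex.sq_norm (q - 1)
    rw [heq1.2] at this; nlinarith [this]
  have hre : q.re ^ 2 + q.im ^ 2 = 1 := by
    have := hn1
    simp [Complex.normSq_apply] at this
    nlinarith [this]
  have hre2 : (q.re - 1) ^ 2 + q.im ^ 2 = 4 := by
    have := hn2
    simp [Complex.normSq_apply, Complex.sub_re, Complex.sub_im] at this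
    nlinarith [this]
  have hq : q = -1 := by
    have h1 : q.re = -1 := by nlinarith
    have h2 : q.im = 0 := by nlinarith
    apply Complex.ext <;> simp [h1, h2]
  refine ⟨hq, ?_⟩
  subst hq
  have : ((-1:ℂ)) ^ (d - 1) = 1 := by
    have h2 : ((-1:ℂ)) ^ (d - 1) * (-2) = -2 := by
      convert h using 2; ring
    field_simp at h2
    exact neg_inj.mp h2
  have heven : Even (d - 1) := by
    rwa [neg_one_pow_eq_one_iff_even] at this
    exact fun hc => by norm_num at hc
  obtain ⟨k, hk⟩ := heven
  exact ⟨k, by omega⟩
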